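/- arXiv:1606.04647 — 5 statements merged into one kernel-verified Lean document; each statement's English description precedes it below -/
import Mathlib

section
/- Let V be a δ-GAS Lyapunov function for f with class-𝒦∞ functions α̲, ᾱ, ρ and bounding function σ, and assume the map s ↦ s − ρ(s) is nondecreasing on [0,∞). Let μ > 0 and let η be a vector of positive quantization parameters satisfying σ(‖η‖) ≤ ρ(α̲(μ)) and ᾱ(‖η‖) ≤ α̲(μ), where ‖η‖ = max_i η(i). Define the relation R_μ ⊆ ℝⁿ × ℝⁿ by (x,ξ) ∈ R_μ ⇔ V(x,ξ) ≤ α̲(μ). Then: (a) for every x ∈ ℝⁿ, (x, [x]_η) ∈ R_μ; (b) for every (x,ξ) ∈ R_μ, ‖x − ξ‖ ≤ μ; (c) for every (x,ξ) ∈ R_μ and every u ∈ U, (f(x,u), [f(ξ,u)]_η) ∈ R_μ. -/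
open Filter

/-- A class-𝒦∞ function: continuous, strictly increasing on `[0,∞)`, vanishing
at `0`, tending to `∞`, and mapping `[0,∞)` into `[0,∞)`. -/
def IsKInf (g : ℝ → ℝ) : Prop :=
  ContinuousOn g (Set.Ici 0) ∧ StrictMonoOn g (Set.Ici 0) ∧ g 0 = 0 ∧
    Tendsto g atTop atTop ∧ ∀ s, 0 ≤ s → 0 ≤ g s

/-- Scalar quantizer: `quant θ z` is the unique integer multiple `q` of `θ`
with `z ∈ [q - θ/2, q + θ/2)`. -/
noncomputable def quant (θ z : ℝ) : ℝ := θ * round (z / θ)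

/-- Coordinatewise quantizer with quantization vector `η`. -/
noncomputable def quantVec {n : ℕ} (η : Fin n → ℝ) (z : Fin n → ℝ) : Fin n → ℝ :=
  fun i => quant (η i) (z i)

lemma quant_err {θ z : ℝ} (hθ : 0 < θ) : |z - quant θ z| ≤ θ / 2 := by
  have hne : θ ≠ 0 := ne_of_gt hθ
  have h : z - quant θ z = θ * (z / θ - round (z / θ)) := by
    unfold quant; field_simp
  rw [h, abs_mul, abs_of_pos hθ]
  have h2 := abs_sub_round (z / θ)
  calc θ * |z / θ - ↑(round (z / θ))| ≤ θ * (1 / 2) :=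
        mul_le_mul_of_nonneg_left h2 hθ.le
    _ = θ / 2 := by ring

lemma quantVec_err {n : ℕ} (η : Fin n → ℝ) (hη : ∀ i, 0 < η i) (z : Fin n → ℝ) :
    ‖z - quantVec η z‖ ≤ ‖η‖ := by
  rw [pi_norm_le_iff_of_nonneg (norm_nonneg η)]
  intro i
  have h1 : |z i - quant (η i) (z i)| ≤ η i / 2 := quant_err (hη i)
  have h2 : |η i| ≤ ‖η‖ := norm_le_pi_norm η i
  have h3 := (hη i).le
  simp only [Pi.sub_apply, Real.norm_eq_abs, quantVec]
  rw [abs_of_pos (hη i)] at h2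
  linarith

theorem stmt_0 {n : ℕ} {U : Type*} [Nonempty U]
    (f : (Fin n → ℝ) → U → (Fin n → ℝ))
    (V : (Fin n → ℝ) → (Fin n → ℝ) → ℝ)
    (α₁ α₂ ρ σ : ℝ → ℝ)
    (hα₁ : IsKInf α₁) (hα₂ : IsKInf α₂) (hρ : IsKInf ρ) (hσ : IsKInf σ)
    (hV0 : ∀ x x', 0 ≤ V x x')
    (hVlow : ∀ x x', α₁ ‖x - x'‖ ≤ V x x')
    (hVup : ∀ x x', V x x' ≤ α₂ ‖x - x'‖)
    (hVdec : ∀ x x' u, V (f x u) (f x' u) - V x x' ≤ -ρ (V x x'))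
    (hσbound : ∀ x y z, |V x y - V x z| ≤ σ ‖y - z‖)
    (hmono : MonotoneOn (fun s => s - ρ s) (Set.Ici 0))
    (μ : ℝ) (hμ : 0 < μ)
    (η : Fin n → ℝ) (hη : ∀ i, 0 < η i)
    (hη1 : σ ‖η‖ ≤ ρ (α₁ μ)) (hη2 : α₂ ‖η‖ ≤ α₁ μ) :
    (∀ x, V x (quantVec η x) ≤ α₁ μ) ∧
    (∀ x ξ, V x ξ ≤ α₁ μ → ‖x - ξ‖ ≤ μ) ∧
    (∀ x ξ, V x ξ ≤ α₁ μ → ∀ u, V (f x u) (quantVec η (f ξ u)) ≤ α₁ μ) := by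
  obtain ⟨_, hα₁mono, _, _, hα₁pos⟩ := hα₁
  obtain ⟨_, hα₂mono, _, _, _⟩ := hα₂
  obtain ⟨_, hσmono, _, _, _⟩ := hσ
  refine ⟨?_, ?_, ?_⟩
  · intro x
    have herr := quantVec_err η hη x
    calc V x (quantVec η x) ≤ α₂ ‖x - quantVec η x‖ := hVup _ _
      _ ≤ α₂ ‖η‖ := hα₂mono.monotoneOn (norm_nonneg _) (norm_nonneg _) herr
      _ ≤ α₁ μ := hη2
  · intro x ξ hxξ
    by_contra h
    push_neg at h
    have : α₁ μ < α₁ ‖x - ξ‖ := hα₁mono hμ.le (norm_nonneg _) h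
    linarith [hVlow x ξ]
  · intro x ξ hxξ u
    have herr := quantVec_err η hη (f ξ u)
    have h1 : V (f x u) (quantVec η (f ξ u)) - V (f x u) (f ξ u) ≤ σ ‖η‖ := by
      have := hσbound (f x u) (quantVec η (f ξ u)) (f ξ u)
      have hσm : σ ‖quantVec η (f ξ u) - f ξ u‖ ≤ σ ‖η‖ := by
        rw [norm_sub_rev]
        exact hσmono.monotoneOn (norm_nonneg _) (norm_nonneg _) herr
      have := abs_le.mp this
      linarith [this.2]
    have h2 := hVdec x ξ u
    have h3 : V x ξ - ρ (V x ξ) ≤ α₁ μ - ρ (α₁ μ) :=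
      hmono (hV0 x ξ) (le_trans (hV0 x ξ) hxξ) hxξ
    linarith
end

section
/- Let V be a δ-GAS Lyapunov function for f with class-𝒦∞ functions α̲, ᾱ, ρ and bounding function σ, assume s ↦ s − ρ(s) is nondecreasing on [0,∞), and let μ > 0 and ε ≥ 0 satisfy σ(ε) ≤ ρ(α̲(μ)). Let u : ℕ → U be an input sequence and let x, ξ : ℕ → ℝⁿ be sequences satisfying x(t+1) = f(x(t), u(t)) and ‖ξ(t+1) − f(ξ(t), u(t))‖ ≤ ε for all t ∈ ℕ, with V(x(0), ξ(0)) ≤ α̲(μ). Then for every t ∈ ℕ, V(x(t), ξ(t)) ≤ α̲(μ), and consequently ‖x(t) − ξ(t)‖ ≤ μ. -/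
open Filter

theorem stmt_3 {n : ℕ} {U : Type*} [Nonempty U]
    (f : (Fin n → ℝ) → U → (Fin n → ℝ))
    (V : (Fin n → ℝ) → (Fin n → ℝ) → ℝ)
    (α₁ α₂ ρ σ : ℝ → ℝ)
    (hα₁ : IsKInf α₁) (hα₂ : IsKInf α₂) (hρ : IsKInf ρ) (hσ : IsKInf σ)
    (hV0 : ∀ x x', 0 ≤ V x x')
    (hVlow : ∀ x x', α₁ ‖x - x'‖ ≤ V x x')
    (hVup : ∀ x x', V x x' ≤ α₂ ‖x - x'‖)
    (hVdec : ∀ x x' u, V (f x u) (f x' u) - V x x' ≤ -ρ (V x x'))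
    (hσbound : ∀ x y z, |V x y - V x z| ≤ σ ‖y - z‖)
    (hmono : MonotoneOn (fun s => s - ρ s) (Set.Ici 0))
    (μ ε : ℝ) (hμ : 0 < μ) (hε : 0 ≤ ε)
    (hεμ : σ ε ≤ ρ (α₁ μ))
    (u : ℕ → U) (x ξ : ℕ → (Fin n → ℝ))
    (hx : ∀ t, x (t + 1) = f (x t) (u t))
    (hξ : ∀ t, ‖ξ (t + 1) - f (ξ t) (u t)‖ ≤ ε)
    (h0 : V (x 0) (ξ 0) ≤ α₁ μ) :
    ∀ t : ℕ, V (x t) (ξ t) ≤ α₁ μ ∧ ‖x t - ξ t‖ ≤ μ := by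

  obtain ⟨-, hα₁m, hα₁0, -, hα₁pos⟩ := hα₁
  obtain ⟨-, hσm, hσ0, -, hσpos⟩ := hσ
  have key : ∀ t, V (x t) (ξ t) ≤ α₁ μ := by
    intro t
    induction t with
    | zero => exact h0
    | succ t ih =>
      have hVpos := hV0 (x t) (ξ t)
      have step1 : V (x (t+1)) (ξ (t+1)) ≤ V (x (t+1)) (f (ξ t) (u t)) + σ ε := by
        have h1 := hσbound (x (t+1)) (ξ (t+1)) (f (ξ t) (u t))
        have h2 : σ ‖ξ (t+1) - f (ξ t) (u t)‖ ≤ σ ε := by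
          rcases eq_or_lt_of_le (hξ t) with h | h
          · rw [h]
          · exact le_of_lt (hσm (norm_nonneg _) hε h)
        have := abs_le.mp h1
        linarith [this.1]
      have step2 : V (x (t+1)) (f (ξ t) (u t)) ≤ V (x t) (ξ t) - ρ (V (x t) (ξ t)) := by
        have := hVdec (x t) (ξ t) (u t)
        rw [hx t]; linarith
      have step3 : V (x t) (ξ t) - ρ (V (x t) (ξ t)) ≤ α₁ μ - ρ (α₁ μ) :=
        hmono hVpos (hα₁pos μ hμ.le) ih
      linarith
  intro t
  refine ⟨key t, ?_⟩
  by_contra h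
  push_neg at h
  have := hα₁m (le_of_lt hμ) (norm_nonneg _) h
  linarith [hVlow (x t) (ξ t), key t]
end

section
/- For the circular thermal network map f, if every control value satisfies u(i) ∈ [0,1], then for all temperature vectors x, x' : ZMod N → ℝ and every coordinate i, |f(x,u)(i) − f(x',u)(i)| ≤ A · max_j |x(j) − x'(j)|, where A = max{|1 − 2α − β − γ|, |1 − 2α − β|} + 2α; equivalently, ‖f(x,u) − f(x',u)‖ ≤ A‖x − x'‖ in the sup norm. -/
/-- The circular thermal network map: room `i` interacts with rooms `i+1` and
`i-1` (cyclically), with the external environment at temperature `Te`, and with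
its heater at temperature `Th` driven by the control `u i`. -/
def thermal (N : ℕ) (α β γ Te Th : ℝ) (x u : ZMod N → ℝ) : ZMod N → ℝ :=
  fun i => x i + α * (x (i + 1) + x (i - 1) - 2 * x i)
    + β * (Te - x i) + γ * (Th - x i) * u i

theorem stmt_6 (N : ℕ) [NeZero N] (hN : 3 ≤ N)
    (α β γ Te Th : ℝ) (hα : 0 < α) (hβ : 0 < β) (hγ : 0 < γ)
    (A : ℝ) (hA : A = max |1 - 2 * α - β - γ| |1 - 2 * α - β| + 2 * α)
    (u : ZMod N → ℝ) (hu : ∀ i, u i ∈ Set.Icc (0 : ℝ) 1)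
    (x x' : ZMod N → ℝ) :
    (∀ i, |thermal N α β γ Te Th x u i - thermal N α β γ Te Th x' u i|
        ≤ A * ‖x - x'‖) ∧
    ‖thermal N α β γ Te Th x u - thermal N α β γ Te Th x' u‖ ≤ A * ‖x - x'‖ := by
  set M : ℝ := max |1 - 2 * α - β - γ| |1 - 2 * α - β| with hM
  have hMnn : 0 ≤ M := le_trans (abs_nonneg _) (le_max_left _ _)
  have hd : ∀ j : ZMod N, |x j - x' j| ≤ ‖x - x'‖ := by
    intro j
    have := norm_le_pi_norm (x - x') j
    simpa using this
  have hdnn : 0 ≤ ‖x - x'‖ := norm_nonneg _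
  have key : ∀ i, |thermal N α β γ Te Th x u i - thermal N α β γ Te Th x' u i|
      ≤ A * ‖x - x'‖ := by
    intro i
    have hui := hu i
    obtain ⟨h0, h1⟩ := hui
    have heq : thermal N α β γ Te Th x u i - thermal N α β γ Te Th x' u i
        = (1 - 2 * α - β - γ * u i) * (x i - x' i)
          + α * (x (i + 1) - x' (i + 1)) + α * (x (i - 1) - x' (i - 1)) := by
      simp only [thermal]; ring
    have hc : |1 - 2 * α - β - γ * u i| ≤ M := by
      have hlow : 1 - 2 * α - β - γ ≤ 1 - 2 * α - β - γ * u i := by nlinarith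
      have hhigh : 1 - 2 * α - β - γ * u i ≤ 1 - 2 * α - β := by nlinarith
      exact abs_le_max_abs_abs hlow hhigh
    calc |thermal N α β γ Te Th x u i - thermal N α β γ Te Th x' u i|
        ≤ |1 - 2 * α - β - γ * u i| * |x i - x' i|
          + α * |x (i + 1) - x' (i + 1)| + α * |x (i - 1) - x' (i - 1)| := by
          rw [heq]
          refine le_trans (abs_add_le _ _) ?_
          gcongr
          · refine le_trans (abs_add_le _ _) ?_
            gcongr
            · exact le_of_eq (abs_mul _ _)
            · rw [abs_mul, abs_of_pos hα]
          · rw [abs_mul, abs_of_pos hα]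
      _ ≤ M * ‖x - x'‖ + α * ‖x - x'‖ + α * ‖x - x'‖ := by
          gcongr <;> first | exact hc | exact hd _
      _ = A * ‖x - x'‖ := by rw [hA]; ring
  refine ⟨key, ?_⟩
  have hAnn : 0 ≤ A := by rw [hA]; positivity
  refine (pi_norm_le_iff_of_nonneg (by positivity)).2 ?_
  intro i
  simpa using key i
end

section
/- For the circular thermal network map f, suppose A = max{|1 − 2α − β − γ|, |1 − 2α − β|} + 2α < 1. Then V(x,x') = ‖x − x'‖ (sup norm) is a δ-GAS Lyapunov function for f on control vectors with values in [0,1], namely: for all x, x' : ZMod N → ℝ and all u with u(i) ∈ [0,1] for every i, one has ‖x − x'‖ ≤ V(x,x') ≤ ‖x − x'‖ and V(f(x,u), f(x',u)) − V(x,x') ≤ −(1 − A)·V(x,x'). -/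
theorem stmt_7 (N : ℕ) [NeZero N] (hN : 3 ≤ N)
    (α β γ Te Th : ℝ) (hα : 0 < α) (hβ : 0 < β) (hγ : 0 < γ)
    (A : ℝ) (hA : A = max |1 - 2 * α - β - γ| |1 - 2 * α - β| + 2 * α)
    (hA1 : A < 1)
    (V : (ZMod N → ℝ) → (ZMod N → ℝ) → ℝ)
    (hV : V = fun x x' => ‖x - x'‖) :
    ∀ (x x' : ZMod N → ℝ) (u : ZMod N → ℝ), (∀ i, u i ∈ Set.Icc (0 : ℝ) 1) →
      ‖x - x'‖ ≤ V x x' ∧ V x x' ≤ ‖x - x'‖ ∧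
      V (thermal N α β γ Te Th x u) (thermal N α β γ Te Th x' u) - V x x'
        ≤ -((1 - A) * V x x') := by
  subst hV hA
  intro x x' u hu
  refine ⟨le_rfl, le_rfl, ?_⟩
  set M : ℝ := max |1 - 2 * α - β - γ| |1 - 2 * α - β| with hM
  have hM0 : 0 ≤ M := le_trans (abs_nonneg _) (le_max_left _ _)
  have hd0 : (0 : ℝ) ≤ ‖x - x'‖ := norm_nonneg _
  have key : ‖thermal N α β γ Te Th x u - thermal N α β γ Te Th x' u‖
      ≤ (M + 2 * α) * ‖x - x'‖ := by
    apply pi_norm_le_iff_of_nonneg (by positivity) |>.2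
    intro i
    have h1 : ‖(x - x') i‖ ≤ ‖x - x'‖ := norm_le_pi_norm (x - x') i
    have h2 : ‖(x - x') (i + 1)‖ ≤ ‖x - x'‖ := norm_le_pi_norm (x - x') (i + 1)
    have h3 : ‖(x - x') (i - 1)‖ ≤ ‖x - x'‖ := norm_le_pi_norm (x - x') (i - 1)
    simp only [Pi.sub_apply, Real.norm_eq_abs] at h1 h2 h3 ⊢
    have heq : thermal N α β γ Te Th x u i - thermal N α β γ Te Th x' u i
        = (1 - 2 * α - β - γ * u i) * (x i - x' i)
          + α * (x (i + 1) - x' (i + 1)) + α * (x (i - 1) - x' (i - 1)) := by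
      simp only [thermal]; ring
    have hcoef : |1 - 2 * α - β - γ * u i| ≤ M := by
      obtain ⟨h0, h1u⟩ := hu i
      rw [abs_le]
      constructor
      · have : -(|1 - 2 * α - β - γ|) ≤ 1 - 2 * α - β - γ := neg_abs_le _
        have hle : 1 - 2 * α - β - γ ≤ 1 - 2 * α - β - γ * u i := by nlinarith
        have := le_max_left |1 - 2 * α - β - γ| |1 - 2 * α - β|
        linarith
      · have : 1 - 2 * α - β ≤ |1 - 2 * α - β| := le_abs_self _
        have hle : 1 - 2 * α - β - γ * u i ≤ 1 - 2 * α - β := by nlinarith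
        have := le_max_right |1 - 2 * α - β - γ| |1 - 2 * α - β|
        linarith
    calc |thermal N α β γ Te Th x u i - thermal N α β γ Te Th x' u i|
        ≤ |(1 - 2 * α - β - γ * u i) * (x i - x' i)|
          + |α * (x (i + 1) - x' (i + 1))| + |α * (x (i - 1) - x' (i - 1))| := by
          rw [heq]; exact (abs_add_le _ _).trans (by gcongr; exact abs_add_le _ _)
      _ = |1 - 2 * α - β - γ * u i| * |x i - x' i|
          + α * |x (i + 1) - x' (i + 1)| + α * |x (i - 1) - x' (i - 1)| := by
          rw [abs_mul, abs_mul, abs_mul, abs_of_pos hα]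
      _ ≤ M * ‖x - x'‖ + α * ‖x - x'‖ + α * ‖x - x'‖ := by
          gcongr <;> first | exact abs_nonneg _ | linarith
      _ = (M + 2 * α) * ‖x - x'‖ := by ring
  linarith
end

section
/- Let r be a relation on a type S (the transition relation), and let X₀ ⊆ S (initial states) and X_m ⊆ S (marked states). Define Reach = {x : ∃ x₀ ∈ X₀, x is reachable from x₀ via the reflexive-transitive closure of r} and CoReach = {x : ∃ x_m ∈ X_m, x_m is reachable from x via the reflexive-transitive closure of r}. Then for every x ∈ S, x ∈ Reach ∩ CoReach if and only if there exists x₀ ∈ X₀ ∩ CoReach such that x is reachable from x₀ via the reflexive-transitive closure of the restricted relation r' given by r'(a,b) ⇔ (r(a,b) ∧ a ∈ CoReach ∧ b ∈ CoReach). In other words, the state set of Ac(CoAc(S)) equals Reach ∩ CoReach. -/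
theorem stmt_12 {S : Type*} (r : S → S → Prop) (X₀ Xm : Set S)
    (Reach : Set S) (hReach : Reach = {x | ∃ x₀ ∈ X₀, Relation.ReflTransGen r x₀ x})
    (CoReach : Set S)
    (hCoReach : CoReach = {x | ∃ xm ∈ Xm, Relation.ReflTransGen r x xm}) :
    ∀ x : S, x ∈ Reach ∩ CoReach ↔
      ∃ x₀ ∈ X₀ ∩ CoReach,
        Relation.ReflTransGen (fun a b => r a b ∧ a ∈ CoReach ∧ b ∈ CoReach) x₀ x := by
  -- CoReach is backward-closed: if r a b and b ∈ CoReach then a ∈ CoReach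
  have back : ∀ a b, Relation.ReflTransGen r a b → b ∈ CoReach → a ∈ CoReach := by
    intro a b hab hb
    rw [hCoReach] at hb ⊢
    obtain ⟨xm, hxm, hb⟩ := hb
    exact ⟨xm, hxm, hab.trans hb⟩
  intro x
  constructor
  · rintro ⟨hx, hxc⟩
    rw [hReach] at hx
    obtain ⟨x₀, hx₀, hpath⟩ := hx
    refine ⟨x₀, ⟨hx₀, back _ _ hpath hxc⟩, ?_⟩
    clear hx₀
    induction hpath using Relation.ReflTransGen.head_induction_on with
    | refl => exact .refl
    | head hab hbx ih =>
      exact Relation.ReflTransGen.head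
        ⟨hab, back _ _ (.head hab hbx) hxc, back _ _ hbx hxc⟩ ih
  · rintro ⟨x₀, ⟨hx₀, hx₀c⟩, hpath⟩
    have hmono : Relation.ReflTransGen r x₀ x ∧ x ∈ CoReach := by
      induction hpath with
      | refl => exact ⟨.refl, hx₀c⟩
      | tail _ hbc ih => exact ⟨ih.1.tail hbc.1, hbc.2.2⟩
    exact ⟨hReach ▸ ⟨x₀, hx₀, hmono.1⟩, hmono.2⟩
end
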